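/- arXiv:0710.2615 — 2 statements merged into one kernel-verified Lean document; each statement's English description precedes it below -/
import Mathlib

section
/- Let G be a topological group. The family of subgroups U_{X,x} of Aut(F_G), indexed by pairs (X, x) with X a continuous discrete G-set and x ∈ X, satisfies: (i) the intersection of any two such subgroups is again of this form, namely U_{X,x} ∩ U_{Y,y} = U_{X×Y,(x,y)}; (ii) the family is stable under conjugation, namely γ U_{X,x} γ⁻¹ = U_{X, γ_X(x)} for every γ ∈ Aut(F_G); (iii) every subgroup of Aut(F_G) containing some U_{X,x} is again of the form U_{Y,y} for some continuous discrete G-set Y and y ∈ Y. Consequently, there is a group topology on Aut(F_G) in which these subgroups are exactly the open subgroups and form a fundamental system of neighborhoods of the identity. -/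
open CategoryTheory

universe u

namespace ProdiscreteCompletion

variable (G : Type u) [Group G] [TopologicalSpace G]

/-- The category `G-Set` of continuous discrete `G`-sets: `G`-sets in which the stabilizer of
every point is an open subgroup of `G` (equivalently, the action map is continuous for the
discrete topology on the set). -/
abbrev ContGSet :=
  ObjectProperty.FullSubcategory (fun X : Action (Type u) G =>
    ∀ x : X.V, IsOpen {g : G | X.ρ g x = x})

/-- The forgetful functor `F_G : G-Set ⥤ Set` on continuous discrete `G`-sets. -/
abbrev forgetContGSet : ContGSet G ⥤ Type u :=
  ObjectProperty.ι _ ⋙ Action.forget _ _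

variable {G}

/-- For `g : G`, the natural automorphism of the forgetful functor whose component at each
continuous discrete `G`-set `X` is the action of `g` on `X`. -/
def iotaIso (g : G) : forgetContGSet G ≅ forgetContGSet G :=
  NatIso.ofComponents
    (fun X => Equiv.toIso
      { toFun := X.obj.ρ g
        invFun := X.obj.ρ g⁻¹
        left_inv := fun x => by
          have h : X.obj.ρ (g⁻¹ * g) x = X.obj.ρ g⁻¹ (X.obj.ρ g x) :=
            types_congr_hom (X.obj.ρ.map_mul g⁻¹ g) x
          rw [inv_mul_cancel] at h
          rw [map_one] at h
          exact h.symm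
        right_inv := fun x => by
          have h : X.obj.ρ (g * g⁻¹) x = X.obj.ρ g (X.obj.ρ g⁻¹ x) :=
            types_congr_hom (X.obj.ρ.map_mul g g⁻¹) x
          rw [mul_inv_cancel] at h
          rw [map_one] at h
          exact h.symm })
    (fun {X Y} f => ConcreteCategory.hom_ext _ _ fun x => (types_congr_hom (f.hom.comm g) x).symm)

variable (G)

/-- The canonical group homomorphism `ι_G : G → G^∧ = Aut (F_G)` sending `g ∈ G` to the
natural automorphism of the forgetful functor acting by `g` on each continuous discrete
`G`-set. -/
def iota : G →* Aut (forgetContGSet G) where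
  toFun := iotaIso
  map_one' := by
    ext X x
    show (iotaIso 1).hom.app X x = _
    simp [iotaIso]
    rfl
  map_mul' g₁ g₂ := by
    ext X x
    have h : X.obj.ρ (g₁ * g₂) x = X.obj.ρ g₁ (X.obj.ρ g₂ x) :=
      types_congr_hom (X.obj.ρ.map_mul g₁ g₂) x
    exact h

variable {G}

/-- The stabilizer subgroup `U_{X,x} ⊆ Aut (F_G)` of a point `x` of a continuous discrete
`G`-set `X`. -/
def USub (X : ContGSet G) (x : X.obj.V) : Subgroup (Aut (forgetContGSet G)) where
  carrier := {γ | γ.hom.app X x = x}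
  one_mem' := rfl
  mul_mem' := by
    intro γ δ hγ hδ
    show (γ * δ).hom.app X x = x
    rw [Aut.Aut_mul_def]
    show γ.hom.app X (δ.hom.app X x) = x
    rw [show δ.hom.app X x = x from hδ]
    exact hγ
  inv_mem' := by
    intro γ hγ
    show γ⁻¹.hom.app X x = x
    conv_lhs => rw [← show γ.hom.app X x = x from hγ]
    rw [Aut.Aut_inv_def]
    exact types_congr_hom (congrArg (fun τ : forgetContGSet G ⟶ forgetContGSet G => τ.app X)
      γ.hom_inv_id) x


variable {G : Type u} [Group G] [TopologicalSpace G]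

/-- The product of two continuous discrete `G`-sets, with the componentwise action. -/
def prodGSet (X Y : ContGSet G) : ContGSet G where
  obj :=
    { V := X.obj.V × Y.obj.V
      ρ :=
        { toFun := fun g => TypeCat.ofHom fun p => (X.obj.ρ g p.1, Y.obj.ρ g p.2)
          map_one' := by
            refine ConcreteCategory.hom_ext _ _ fun p => ?_
            simp
          map_mul' := fun g h => by
            refine ConcreteCategory.hom_ext _ _ fun p => ?_
            exact Prod.ext (types_congr_hom (X.obj.ρ.map_mul g h) p.1)
              (types_congr_hom (Y.obj.ρ.map_mul g h) p.2) } }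
  property := fun p => by
    show IsOpen {g : G | (X.obj.ρ g p.1, Y.obj.ρ g p.2) = p}
    have h : {g : G | (X.obj.ρ g p.1, Y.obj.ρ g p.2) = p} =
        {g : G | X.obj.ρ g p.1 = p.1} ∩ {g : G | Y.obj.ρ g p.2 = p.2} := by
      ext g
      simp [Prod.ext_iff]
    rw [h]
    exact (X.property p.1).inter (Y.property p.2)

/-! ### Auxiliary material -/

lemma aux_mul_app (a b : Aut (forgetContGSet G)) (X : ContGSet G) (z : X.obj.V) :
    (a * b).hom.app X z = a.hom.app X (b.hom.app X z) := by
  rw [Aut.Aut_mul_def]; rfl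

lemma aux_inv_app_app (a : Aut (forgetContGSet G)) (X : ContGSet G) (z : X.obj.V) :
    a⁻¹.hom.app X (a.hom.app X z) = z := by
  rw [Aut.Aut_inv_def]
  exact types_congr_hom (congrArg (fun τ : forgetContGSet G ⟶ forgetContGSet G => τ.app X)
    a.hom_inv_id) z

lemma aux_app_inv_app (a : Aut (forgetContGSet G)) (X : ContGSet G) (z : X.obj.V) :
    a.hom.app X (a⁻¹.hom.app X z) = z := by
  rw [Aut.Aut_inv_def]
  exact types_congr_hom (congrArg (fun τ : forgetContGSet G ⟶ forgetContGSet G => τ.app X)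
    a.inv_hom_id) z

lemma aux_naturality (γ : Aut (forgetContGSet G)) {X Y : ContGSet G} (f : X ⟶ Y)
    (z : X.obj.V) : γ.hom.app Y (f.hom z) = f.hom (γ.hom.app X z) :=
  types_congr_hom (γ.hom.naturality f) z

lemma rho_mul (X : ContGSet G) (a b : G) (z : X.obj.V) :
    X.obj.ρ (a * b) z = X.obj.ρ a (X.obj.ρ b z) :=
  types_congr_hom (X.obj.ρ.map_mul a b) z

lemma rho_one (X : ContGSet G) (z : X.obj.V) : X.obj.ρ 1 z = z := by
  simpa using types_congr_hom X.obj.ρ.map_one z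

lemma rho_inv (X : ContGSet G) (a : G) (z : X.obj.V) :
    X.obj.ρ a⁻¹ (X.obj.ρ a z) = z := by
  rw [← rho_mul, inv_mul_cancel, rho_one]

/-- The first projection from a product `G`-set. -/
def prodFstHom (X Y : ContGSet G) : prodGSet X Y ⟶ X :=
  ⟨{ hom := TypeCat.ofHom Prod.fst, comm := fun _ => rfl }⟩

/-- The second projection from a product `G`-set. -/
def prodSndHom (X Y : ContGSet G) : prodGSet X Y ⟶ Y :=
  ⟨{ hom := TypeCat.ofHom Prod.snd, comm := fun _ => rfl }⟩

lemma app_prod (X Y : ContGSet G) (γ : Aut (forgetContGSet G))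
    (p : (prodGSet X Y).obj.V) :
    γ.hom.app (prodGSet X Y) p = (γ.hom.app X p.1, γ.hom.app Y p.2) := by
  have h1 := aux_naturality γ (prodFstHom X Y) p
  have h2 := aux_naturality γ (prodSndHom X Y) p
  exact Prod.ext h1.symm h2.symm

lemma USub_inter (X Y : ContGSet G) (x : X.obj.V) (y : Y.obj.V) :
    USub X x ⊓ USub Y y = USub (prodGSet X Y) (x, y) := by
  ext γ
  show γ.hom.app X x = x ∧ γ.hom.app Y y = y ↔ γ.hom.app (prodGSet X Y) (x, y) = (x, y)
  erw [app_prod, Prod.ext_iff]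

lemma USub_conj (X : ContGSet G) (x : X.obj.V) (γ : Aut (forgetContGSet G)) :
    Subgroup.map (MulAut.conj γ).toMonoidHom (USub X x) = USub X (γ.hom.app X x) := by
  ext η
  constructor
  · rintro ⟨δ, hδ, rfl⟩
    show (γ * δ * γ⁻¹).hom.app X (γ.hom.app X x) = γ.hom.app X x
    erw [aux_mul_app, aux_mul_app, aux_inv_app_app, show δ.hom.app X x = x from hδ]
  · intro hη
    refine ⟨γ⁻¹ * η * γ, ?_, ?_⟩
    · show (γ⁻¹ * η * γ).hom.app X x = x
      erw [aux_mul_app, aux_mul_app,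
        show η.hom.app X (γ.hom.app X x) = γ.hom.app X x from hη, aux_inv_app_app]
    · show γ * (γ⁻¹ * η * γ) * γ⁻¹ = η
      group

/-- The stabilizer of `x` in `G`, as a subgroup. -/
def stabSub (X : ContGSet G) (x : X.obj.V) : Subgroup G where
  carrier := {g | X.obj.ρ g x = x}
  one_mem' := rho_one X x
  mul_mem' := by
    intro a b ha hb
    show X.obj.ρ (a * b) x = x
    rw [rho_mul, show X.obj.ρ b x = x from hb, show X.obj.ρ a x = x from ha]
  inv_mem' := by
    intro a ha
    show X.obj.ρ a⁻¹ x = x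
    conv_lhs => rw [← show X.obj.ρ a x = x from ha]
    exact rho_inv X a x

/-- The `G`-orbit of a point, as a continuous discrete `G`-set. -/
def orbitGSet (X : ContGSet G) (x : X.obj.V) : ContGSet G where
  obj :=
    { V := {z : X.obj.V // ∃ g : G, X.obj.ρ g x = z}
      ρ :=
        { toFun := fun (g : G) => TypeCat.ofHom fun z => ⟨X.obj.ρ g z.1, by
            obtain ⟨a, ha⟩ := z.2
            exact ⟨g * a, by rw [rho_mul, ha]⟩⟩
          map_one' := by
            refine ConcreteCategory.hom_ext _ _ fun z => ?_
            exact Subtype.ext (rho_one X z.1)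
          map_mul' := fun g h => by
            refine ConcreteCategory.hom_ext _ _ fun z => ?_
            exact Subtype.ext (rho_mul X g h z.1) } }
  property := fun z => by
    convert X.property z.1 using 1
    ext g
    exact Subtype.ext_iff

/-- The basepoint of the orbit. -/
def orbitPt (X : ContGSet G) (x : X.obj.V) : (orbitGSet X x).obj.V :=
  ⟨x, 1, rho_one X x⟩

/-- The inclusion of the orbit into the ambient `G`-set. -/
def orbitIncl (X : ContGSet G) (x : X.obj.V) : orbitGSet X x ⟶ X :=
  ⟨{ hom := TypeCat.ofHom Subtype.val, comm := fun _ => rfl }⟩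

lemma app_orbit_val (X : ContGSet G) (x : X.obj.V) (γ : Aut (forgetContGSet G))
    (z : (orbitGSet X x).obj.V) :
    γ.hom.app X z.1 = (γ.hom.app (orbitGSet X x) z).1 :=
  aux_naturality γ (orbitIncl X x) z

lemma USub_orbit (X : ContGSet G) (x : X.obj.V) :
    USub (orbitGSet X x) (orbitPt X x) = USub X x := by
  ext γ
  show γ.hom.app (orbitGSet X x) (orbitPt X x) = orbitPt X x ↔ γ.hom.app X x = x
  erw [Subtype.ext_iff]
  have key := app_orbit_val X x γ (orbitPt X x)
  rw [← key]
  exact Iff.rfl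

/-- The `G`-set of left cosets of an open subgroup. -/
def cosetGSet [IsTopologicalGroup G] (K' : Subgroup G) (hK' : IsOpen (K' : Set G)) :
    ContGSet G where
  obj :=
    { V := G ⧸ K'
      ρ :=
        { toFun := fun (g : G) => TypeCat.ofHom fun q => g • q
          map_one' := by refine ConcreteCategory.hom_ext _ _ fun q => ?_; simp
          map_mul' := fun (g h : G) => by
            refine ConcreteCategory.hom_ext _ _ fun q => ?_; exact mul_smul g h q } }
  property := fun q => by
    induction q using QuotientGroup.induction_on with
    | _ a =>
      have h : {g : G | g • (QuotientGroup.mk a : G ⧸ K') = QuotientGroup.mk a}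
          = (fun g : G => a⁻¹ * g⁻¹ * a) ⁻¹' (K' : Set G) := by
        ext g
        simp only [Set.mem_setOf_eq, Set.mem_preimage, SetLike.mem_coe]
        rw [show g • (QuotientGroup.mk a : G ⧸ K') = QuotientGroup.mk (g * a) from
          MulAction.Quotient.smul_mk K' g a, QuotientGroup.eq]
        constructor <;> intro hh <;> [skip; skip] <;>
          · have := hh
            simpa [mul_assoc, mul_inv_rev] using this
      show IsOpen {g : G | g • (QuotientGroup.mk a : G ⧸ K') = QuotientGroup.mk a}
      rw [h]
      exact hK'.preimage (by continuity)

lemma iota_app (g : G) (X : ContGSet G) (z : X.obj.V) :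
    (iota G g).hom.app X z = X.obj.ρ g z := rfl

/-- The canonical `G`-map from the orbit of `x` to `G ⧸ K'` when the stabilizer of `x` is
contained in `K'`. -/
noncomputable def orbitToCoset [IsTopologicalGroup G] (X : ContGSet G) (x : X.obj.V) (K' : Subgroup G)
    (hK' : IsOpen (K' : Set G)) (hsub : stabSub X x ≤ K') :
    orbitGSet X x ⟶ cosetGSet K' hK' where
  hom := ⟨TypeCat.ofHom fun z => QuotientGroup.mk (Classical.choose z.2), fun (g : G) => by
    refine ConcreteCategory.hom_ext _ _ fun z => ?_
    set w : (orbitGSet X x).obj.V := (orbitGSet X x).obj.ρ g z with hw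
    show QuotientGroup.mk (Classical.choose w.2)
      = g • (QuotientGroup.mk (Classical.choose z.2) : G ⧸ K')
    rw [show g • (QuotientGroup.mk (Classical.choose z.2) : G ⧸ K')
        = QuotientGroup.mk (g * Classical.choose z.2) from
      MulAction.Quotient.smul_mk K' g _, QuotientGroup.eq]
    apply hsub
    show X.obj.ρ ((Classical.choose w.2)⁻¹ * (g * Classical.choose z.2)) x = x
    have hb : X.obj.ρ (Classical.choose w.2) x = w.1 := Classical.choose_spec w.2
    have ha : X.obj.ρ (Classical.choose z.2) x = z.1 := Classical.choose_spec z.2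
    have hw1 : w.1 = X.obj.ρ g z.1 := rfl
    have h0 := rho_inv X (Classical.choose w.2) x
    rw [hb] at h0
    rw [rho_mul, rho_mul, ha, ← hw1]
    exact h0⟩

lemma USub_upward [IsTopologicalGroup G] (X : ContGSet G) (x : X.obj.V)
    (K : Subgroup (Aut (forgetContGSet G))) (hK : USub X x ≤ K) :
    ∃ (Y : ContGSet G) (y : Y.obj.V), K = USub Y y := by
  set K' : Subgroup G := Subgroup.comap (iota G) K with hK'def
  have hstab : stabSub X x ≤ K' := by
    intro h hh
    show iota G h ∈ K
    apply hK
    show (iota G h).hom.app X x = x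
    rw [iota_app]
    exact hh
  have hK'open : IsOpen (K' : Set G) := Subgroup.isOpen_mono hstab (X.property x)
  set Y : ContGSet G := cosetGSet K' hK'open with hY
  set y : Y.obj.V := QuotientGroup.mk 1 with hy
  set f : orbitGSet X x ⟶ Y := orbitToCoset X x K' hK'open hstab with hf
  set x' : (orbitGSet X x).obj.V := orbitPt X x with hx'
  -- the chosen group element moving `x` to `γ x`
  have hfx' : f.hom x' = y := by
    show QuotientGroup.mk (Classical.choose x'.2) = QuotientGroup.mk 1
    rw [QuotientGroup.eq]
    apply hstab
    have hc : X.obj.ρ (Classical.choose x'.2) x = x := Classical.choose_spec x'.2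
    show X.obj.ρ ((Classical.choose x'.2)⁻¹ * (1 : G)) x = x
    have h0 := rho_inv X (Classical.choose x'.2) x
    rw [hc] at h0
    rw [rho_mul, rho_one]
    exact h0
  refine ⟨Y, y, ?_⟩
  ext γ
  set g : G := Classical.choose ((γ.hom.app (orbitGSet X x) x').2) with hg
  have hgspec : X.obj.ρ g x = (γ.hom.app (orbitGSet X x) x').1 :=
    Classical.choose_spec ((γ.hom.app (orbitGSet X x) x').2)
  have happY : γ.hom.app Y y = QuotientGroup.mk g := by
    rw [← hfx', aux_naturality γ f x']
    rfl
  have happX : γ.hom.app X x = X.obj.ρ g x := by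
    rw [hgspec]
    exact app_orbit_val X x γ x'
  have hfix : (iota G g)⁻¹ * γ ∈ USub X x := by
    show ((iota G g)⁻¹ * γ).hom.app X x = x
    rw [aux_mul_app, happX, ← map_inv, iota_app]
    exact rho_inv X g x
  constructor
  · intro hγK
    show γ.hom.app Y y = y
    have h1 : (iota G g)⁻¹ * γ ∈ K := hK hfix
    have h2 : iota G g ∈ K := by
      have : γ * ((iota G g)⁻¹ * γ)⁻¹ = iota G g := by group
      rw [← this]
      exact K.mul_mem hγK (K.inv_mem h1)
    have hgK' : g ∈ K' := h2
    rw [happY, hy]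
    show ((g : G) : G ⧸ K') = ((1 : G) : G ⧸ K')
    rw [QuotientGroup.eq]
    simpa using K'.inv_mem hgK'
  · intro hγU
    have h3 : γ.hom.app Y y = y := hγU
    rw [happY, hy] at h3
    change ((g : G) : G ⧸ K') = ((1 : G) : G ⧸ K') at h3
    rw [QuotientGroup.eq] at h3
    have hgK' : g ∈ K' := by simpa using K'.inv_mem h3
    have h2 : iota G g ∈ K := hgK'
    have : γ = iota G g * ((iota G g)⁻¹ * γ) := by group
    rw [this]
    exact K.mul_mem h2 (hK hfix)

/-- The one-point `G`-set. -/
def trivGSet : ContGSet G where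
  obj := { V := PUnit, ρ := { toFun := fun _ => 𝟙 _, map_one' := rfl, map_mul' := fun _ _ => rfl } }
  property := fun z => by
    convert isOpen_univ using 1
    exact Set.eq_univ_of_forall fun g => rfl

/-- The group filter basis on `Aut (F_G)` given by the stabilizer subgroups. -/
def autGFB [IsTopologicalGroup G] : GroupFilterBasis (Aut (forgetContGSet G)) where
  sets := {S | ∃ (X : ContGSet G) (x : X.obj.V), S = ↑(USub X x)}
  nonempty := ⟨↑(USub (trivGSet (G := G)) PUnit.unit), trivGSet, PUnit.unit, rfl⟩
  inter_sets := by
    rintro S T ⟨X, x, rfl⟩ ⟨Y, y, rfl⟩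
    refine ⟨↑(USub (prodGSet X Y) (x, y)), ⟨prodGSet X Y, (x, y), rfl⟩, ?_⟩
    rw [← USub_inter]
    exact Set.Subset.rfl
  one' := by
    rintro S ⟨X, x, rfl⟩
    exact (USub X x).one_mem
  mul' := by
    rintro S ⟨X, x, rfl⟩
    refine ⟨↑(USub X x), ⟨X, x, rfl⟩, ?_⟩
    rintro z hz
    rw [Set.mem_mul] at hz
    obtain ⟨a, ha, b, hb, rfl⟩ := hz
    exact (USub X x).mul_mem ha hb
  inv' := by
    rintro S ⟨X, x, rfl⟩
    exact ⟨↑(USub X x), ⟨X, x, rfl⟩, fun a ha => (USub X x).inv_mem ha⟩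
  conj' := by
    rintro γ S ⟨X, x, rfl⟩
    refine ⟨↑(USub X (γ⁻¹.hom.app X x)), ⟨X, γ⁻¹.hom.app X x, rfl⟩, ?_⟩
    intro δ hδ
    show (γ * δ * γ⁻¹).hom.app X x = x
    erw [aux_mul_app, aux_mul_app,
      show δ.hom.app X (γ⁻¹.hom.app X x) = γ⁻¹.hom.app X x from hδ, aux_app_inv_app]


/-- Proposition `P:topology` of the paper.  For a topological group `G`, the
stabilizer subgroups `U_{X,x} ⊆ Aut (F_G)` (for `X` a continuous discrete `G`-set and
`x ∈ X`) are closed under intersection (via products), closed under conjugation, and every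
subgroup containing some `U_{X,x}` is again of this form; consequently they are exactly the
open subgroups of a group topology on `Aut (F_G)`, for which they form a fundamental system of
neighborhoods of the identity. -/
theorem stabilizer_subgroups_form_prodiscrete_topology
    (G : Type u) [Group G] [TopologicalSpace G] [IsTopologicalGroup G] :
    (∀ (X Y : ContGSet G) (x : X.obj.V) (y : Y.obj.V),
      USub X x ⊓ USub Y y = USub (prodGSet X Y) (x, y)) ∧
    (∀ (X : ContGSet G) (x : X.obj.V) (γ : Aut (forgetContGSet G)),
      Subgroup.map (MulAut.conj γ).toMonoidHom (USub X x) = USub X (γ.hom.app X x)) ∧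
    (∀ (X : ContGSet G) (x : X.obj.V) (K : Subgroup (Aut (forgetContGSet G))),
      USub X x ≤ K → ∃ (Y : ContGSet G) (y : Y.obj.V), K = USub Y y) ∧
    (∃ t : TopologicalSpace (Aut (forgetContGSet G)),
      @IsTopologicalGroup (Aut (forgetContGSet G)) t _ ∧
      (∀ K : Subgroup (Aut (forgetContGSet G)),
        @IsOpen _ t (K : Set (Aut (forgetContGSet G))) ↔
          ∃ (X : ContGSet G) (x : X.obj.V), K = USub X x) ∧
      (@nhds _ t 1).HasBasis
        (fun K : Subgroup (Aut (forgetContGSet G)) =>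
          ∃ (X : ContGSet G) (x : X.obj.V), K = USub X x)
        (fun K => (K : Set (Aut (forgetContGSet G))))) := by
  refine ⟨USub_inter, USub_conj, USub_upward, ?_⟩
  refine ⟨(autGFB (G := G)).topology, (autGFB (G := G)).isTopologicalGroup, ?_, ?_⟩
  · intro K
    letI := (autGFB (G := G)).topology
    haveI := (autGFB (G := G)).isTopologicalGroup
    constructor
    · intro hopen
      have h1 : (K : Set (Aut (forgetContGSet G))) ∈ @nhds _ (autGFB (G := G)).topology 1 :=
        hopen.mem_nhds K.one_mem
      rw [(autGFB (G := G)).nhds_one_hasBasis.mem_iff] at h1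
      obtain ⟨V, ⟨X, x, rfl⟩, hVK⟩ := h1
      exact USub_upward X x K hVK
    · rintro ⟨X, x, rfl⟩
      exact Subgroup.isOpen_of_mem_nhds _
        ((autGFB (G := G)).mem_nhds_one ⟨X, x, rfl⟩)
  · constructor
    intro t
    rw [(autGFB (G := G)).nhds_one_hasBasis.mem_iff]
    constructor
    · rintro ⟨V, ⟨X, x, rfl⟩, hVt⟩
      exact ⟨USub X x, ⟨X, x, rfl⟩, hVt⟩
    · rintro ⟨K, ⟨X, x, rfl⟩, hKt⟩
      exact ⟨↑(USub X x), ⟨X, x, rfl⟩, hKt⟩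

end ProdiscreteCompletion
end

section
/- Let f : Y → X be a covering map of topological spaces all of whose fibers are finite. If X is metrizable, then Y is metrizable. -/
open Topology Set Filter Function

/-- If `f : Y → X` is a covering map all of whose fibers are finite and `X` is
metrizable, then `Y` is metrizable. -/
theorem metrizableSpace_of_finite_coveringMap
    {X Y : Type*} [TopologicalSpace X] [TopologicalSpace Y]
    (f : Y → X) (hf : IsCoveringMap f) (hfin : ∀ x : X, (f ⁻¹' {x}).Finite)
    [TopologicalSpace.MetrizableSpace X] :
    TopologicalSpace.MetrizableSpace Y := by
  classical
  letI : MetricSpace X := TopologicalSpace.metrizableSpaceMetric X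
  rcases isEmpty_or_nonempty Y with hY | ⟨⟨y₀⟩⟩
  · infer_instance
  have hrange : IsClosed (Set.range f) := by
    rw [← isOpen_compl_iff, isOpen_iff_forall_mem_open]
    intro x hx
    obtain ⟨_, U, hxU, hU, -, H, -⟩ := hf x
    refine ⟨U, ?_, hU, hxU⟩
    rintro z hzU ⟨y, rfl⟩
    exact hx ⟨(H ⟨y, hzU⟩).2.1, (H ⟨y, hzU⟩).2.2⟩
  let g : X → X := fun x => if (f ⁻¹' {x}).Nonempty then x else f y₀
  have hg : ∀ x ∈ Set.range f, g x = x := by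
    rintro x ⟨y, rfl⟩
    exact if_pos ⟨y, rfl⟩
  have hgne : ∀ x : X, Nonempty (f ⁻¹' {g x} : Set Y) := by
    intro x
    by_cases h : (f ⁻¹' {x}).Nonempty
    · simp only [g, if_pos h]; exact h.to_subtype
    · simp only [g, if_neg h]; exact ⟨⟨y₀, rfl⟩⟩
  -- trivializations at every point
  let t : ∀ x : X, Bundle.Trivialization (f ⁻¹' {g x} : Set Y) f := fun x =>
    haveI := hgne x; (hf (g x)).toTrivialization
  have ht : ∀ x ∈ Set.range f, x ∈ (t x).baseSet := by
    intro x hx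
    have := (haveI := hgne x; (hf (g x)).mem_toTrivialization_baseSet)
    exact @Eq.rec _ (g x) (fun z _ => z ∈ (t x).baseSet) this x (hg x hx)
  haveI hdisc : ∀ x : X, DiscreteTopology (f ⁻¹' {g x} : Set Y) := fun x => (hf (g x)).1
  haveI hfinite : ∀ x : X, Finite (f ⁻¹' {g x} : Set Y) := fun x => (hfin (g x)).to_subtype
  -- partition of unity subordinate to the trivializing base sets
  obtain ⟨ρ, hρ⟩ := PartitionOfUnity.exists_isSubordinate (X := X) hrange
    (fun x => (t x).baseSet) (fun x => (t x).open_baseSet)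
    (fun x hx => Set.mem_iUnion.mpr ⟨x, ht x hx⟩)
  -- the index type of sheets
  letI J := Σ x : X, (f ⁻¹' {g x} : Set Y)
  letI : TopologicalSpace J := ⊥
  haveI : DiscreteTopology J := ⟨rfl⟩
  -- the sheet indicator functions
  let ψ : J → Y → ℝ := fun k y =>
    if y ∈ (t k.1).source ∧ ((t k.1) y).2 = k.2 then ρ k.1 (f y) else 0
  have hψ01 : ∀ (k : J) (y : Y), ψ k y ∈ Set.Icc (0 : ℝ) 1 := by
    intro k y
    simp only [ψ]
    split
    · exact ⟨ρ.nonneg _ _, ρ.le_one _ _⟩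
    · exact ⟨le_refl 0, zero_le_one⟩
  -- openness of sheets
  have hsheet : ∀ (i : X) (j : (f ⁻¹' {g i} : Set Y)),
      IsOpen {z | z ∈ (t i).source ∧ ((t i) z).2 = j} := by
    intro i j
    have h1 : {z | z ∈ (t i).source ∧ ((t i) z).2 = j}
        = (t i).source ∩ (t i) ⁻¹' (Set.univ ×ˢ ({j} : Set (f ⁻¹' {g i} : Set Y))) := by
      ext z
      simp only [Set.mem_setOf_eq, Set.mem_inter_iff, Set.mem_preimage, Set.mem_prod,
        Set.mem_univ, true_and, Set.mem_singleton_iff]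
    rw [h1]
    exact (t i).continuousOn_toFun.isOpen_inter_preimage (t i).open_source
      (isOpen_univ.prod (isOpen_discrete _))
  -- sheet complement within source is open
  have hsheet' : ∀ (i : X) (j : (f ⁻¹' {g i} : Set Y)),
      IsOpen {z | z ∈ (t i).source ∧ ((t i) z).2 ≠ j} := by
    intro i j
    have h1 : {z | z ∈ (t i).source ∧ ((t i) z).2 ≠ j}
        = (t i).source ∩ (t i) ⁻¹' (Set.univ ×ˢ (({j} : Set (f ⁻¹' {g i} : Set Y))ᶜ)) := by
      ext z
      simp only [Set.mem_setOf_eq, Set.mem_inter_iff, Set.mem_preimage, Set.mem_prod,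
        Set.mem_univ, true_and, Set.mem_compl_iff, Set.mem_singleton_iff]
    rw [h1]
    exact (t i).continuousOn_toFun.isOpen_inter_preimage (t i).open_source
      (isOpen_univ.prod (isOpen_discrete _))
  -- each ψ k is continuous
  have hψcont : ∀ k : J, Continuous (ψ k) := by
    rintro ⟨i, j⟩
    rw [continuous_iff_continuousAt]
    intro y
    by_cases hy : y ∈ (t i).source
    · by_cases hj : ((t i) y).2 = j
      · have hc : ContinuousAt (fun z => ρ i (f z)) y :=
          ((ρ i).continuous.comp hf.continuous).continuousAt
        refine hc.congr ?_
        filter_upwards [(hsheet i j).mem_nhds ⟨hy, hj⟩] with z hz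
        simp only [ψ, if_pos hz]
      · have hc : ContinuousAt (fun _ : Y => (0 : ℝ)) y := continuousAt_const
        refine hc.congr ?_
        filter_upwards [(hsheet' i j).mem_nhds ⟨hy, hj⟩] with z hz
        simp only [ψ]
        rw [if_neg]
        rintro ⟨_, h2⟩
        exact hz.2 h2
    · have hyb : f y ∉ tsupport (ρ i) := by
        intro hmem
        exact hy ((t i).mem_source.mpr (hρ i hmem))
      have hc : ContinuousAt (fun _ : Y => (0 : ℝ)) y := continuousAt_const
      refine hc.congr ?_
      have hopen : IsOpen (f ⁻¹' (tsupport (ρ i))ᶜ) :=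
        (isClosed_tsupport _).isOpen_compl.preimage hf.continuous
      filter_upwards [hopen.mem_nhds hyb] with z hz
      have hz0 : ρ i (f z) = 0 := image_eq_zero_of_notMem_tsupport hz
      simp only [ψ]
      split <;> simp [hz0]
  -- the bounded-function-valued map
  let Ψ : Y → BoundedContinuousFunction J ℝ := fun y =>
    ⟨⟨fun k => ψ k y, continuous_of_discreteTopology⟩, 1, fun a b =>
      Real.dist_le_of_mem_Icc_01 (hψ01 a y) (hψ01 b y)⟩
  have hΨapp : ∀ (y : Y) (k : J), Ψ y k = ψ k y := fun y k => rfl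
  -- continuity of Ψ
  have hΨcont : Continuous Ψ := by
    rw [continuous_iff_continuousAt]
    intro y0
    rw [ContinuousAt, Metric.tendsto_nhds]
    intro ε hε
    obtain ⟨N, hN, hSfin⟩ := ρ.locallyFinite (f y0)
    set S := {i | (Function.support (ρ i) ∩ N).Nonempty} with hS
    let K : Set J := ⋃ i ∈ S, Sigma.mk i '' Set.univ
    have hK : K.Finite := hSfin.biUnion fun i _ => Set.finite_univ.image _
    have hmemK : ∀ k : J, k.1 ∈ S → k ∈ K := by
      rintro ⟨i, j⟩ hk
      exact Set.mem_biUnion hk ⟨j, Set.mem_univ _, rfl⟩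
    have h1 : ∀ᶠ y in 𝓝 y0, ∀ k ∈ K, |ψ k y - ψ k y0| ≤ ε / 2 := by
      rw [eventually_all_finite hK]
      intro k _
      have h := Metric.tendsto_nhds.mp ((hψcont k).continuousAt (x := y0)) (ε / 2) (by positivity)
      filter_upwards [h] with y hy
      rw [Real.dist_eq] at hy
      exact hy.le
    have h2 : ∀ᶠ y in 𝓝 y0, f y ∈ N :=
      hf.continuous.continuousAt.preimage_mem_nhds hN
    have hfy0 : f y0 ∈ N := mem_of_mem_nhds hN
    filter_upwards [h1, h2] with y hy1 hy2
    have hd : dist (Ψ y) (Ψ y0) ≤ ε / 2 := by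
      rw [BoundedContinuousFunction.dist_le (by positivity)]
      intro k
      rw [hΨapp, hΨapp, Real.dist_eq]
      by_cases hk : k.1 ∈ S
      · exact hy1 k (hmemK k hk)
      · have hz : ∀ {z : Y}, f z ∈ N → ψ k z = 0 := by
          intro z hzN
          have h0 : ρ k.1 (f z) = 0 := by
            by_contra h
            exact hk ⟨f z, Function.mem_support.mpr h, hzN⟩
          simp only [ψ]
          split <;> simp [h0]
        rw [hz hy2, hz hfy0]
        simp
        positivity
    linarith
  -- the embedding
  let Φ : Y → X × BoundedContinuousFunction J ℝ := fun y => (f y, Ψ y)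
  have hΦcont : Continuous Φ := hf.continuous.prodMk hΨcont
  -- injectivity
  have hinj : Function.Injective Φ := by
    intro y1 y2 h
    have hfy : f y1 = f y2 := congrArg Prod.fst h
    have hΨeq : ∀ k : J, ψ k y1 = ψ k y2 := fun k =>
      congrArg (fun p : X × BoundedContinuousFunction J ℝ => p.2 k) h
    obtain ⟨i, hi⟩ := ρ.exists_pos (Set.mem_range_self y1)
    have hbase : f y1 ∈ (t i).baseSet :=
      hρ i (subset_tsupport _ (Function.mem_support.mpr hi.ne'))
    have hy1s : y1 ∈ (t i).source := (t i).mem_source.mpr hbase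
    have hy2s : y2 ∈ (t i).source := (t i).mem_source.mpr (hfy ▸ hbase)
    have h1 : ψ ⟨i, ((t i) y1).2⟩ y1 = ρ i (f y1) := if_pos ⟨hy1s, rfl⟩
    have h2 := hΨeq ⟨i, ((t i) y1).2⟩
    rw [h1] at h2
    have hb : y2 ∈ (t i).source ∧ ((t i) y2).2 = ((t i) y1).2 := by
      by_contra hcon
      have : ψ ⟨i, ((t i) y1).2⟩ y2 = 0 := if_neg hcon
      rw [this] at h2
      exact hi.ne' h2
    refine (t i).toOpenPartialHomeomorph.injOn hy1s hy2s (Prod.ext ?_ ?_)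
    · show ((t i) y1).1 = ((t i) y2).1
      rw [(t i).coe_fst hy1s, (t i).coe_fst hy2s]
      exact hfy
    · show ((t i) y1).2 = ((t i) y2).2
      exact hb.2.symm
  -- inducing
  have hΦind : Topology.IsInducing Φ := by
    rw [isInducing_iff_nhds]
    intro y0
    refine le_antisymm (tendsto_iff_comap.mp hΦcont.continuousAt) ?_
    intro V hV
    rw [Filter.mem_comap]
    obtain ⟨V', hV'sub, hV'open, hy0V'⟩ := mem_nhds_iff.mp hV
    obtain ⟨i, hi⟩ := ρ.exists_pos (Set.mem_range_self y0)
    have hbase : f y0 ∈ (t i).baseSet :=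
      hρ i (subset_tsupport _ (Function.mem_support.mpr hi.ne'))
    have hy0s : y0 ∈ (t i).source := (t i).mem_source.mpr hbase
    set j0 := ((t i) y0).2 with hj0
    set c := ρ i (f y0) with hc
    set A := {z | z ∈ (t i).source ∧ ((t i) z).2 = j0} with hA
    have hAopen : IsOpen A := hsheet i j0
    set V'' := V' ∩ A with hV''
    have hV''open : IsOpen V'' := hV'open.inter hAopen
    have hy0V'' : y0 ∈ V'' := ⟨hy0V', hy0s, rfl⟩
    refine ⟨(f '' V'') ×ˢ {g : BoundedContinuousFunction J ℝ | c / 2 < g ⟨i, j0⟩}, ?_, ?_⟩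
    · refine IsOpen.mem_nhds ?_ ?_
      · exact (hf.isOpenMap _ hV''open).prod
          (isOpen_lt continuous_const (continuous_eval_const _))
      · constructor
        · exact ⟨y0, hy0V'', rfl⟩
        · show c / 2 < ψ ⟨i, j0⟩ y0
          rw [show ψ ⟨i, j0⟩ y0 = ρ i (f y0) from if_pos ⟨hy0s, rfl⟩, ← hc]
          linarith
    · intro y hy
      obtain ⟨hy1, hy2⟩ := hy
      have hy2' : c / 2 < ψ ⟨i, j0⟩ y := hy2
      have hyb : y ∈ (t i).source ∧ ((t i) y).2 = j0 := by
        by_contra hcon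
        rw [show ψ ⟨i, j0⟩ y = 0 from if_neg hcon] at hy2'
        linarith
      obtain ⟨y', hy'V'', hfy'⟩ := hy1
      have heq : y' = y := by
        refine (t i).toOpenPartialHomeomorph.injOn hy'V''.2.1 hyb.1 (Prod.ext ?_ ?_)
        · show ((t i) y').1 = ((t i) y).1
          rw [(t i).coe_fst hy'V''.2.1, (t i).coe_fst hyb.1]
          exact hfy'
        · show ((t i) y').2 = ((t i) y).2
          exact hy'V''.2.2.trans hyb.2.symm
      exact hV'sub (heq ▸ hy'V''.1)
  exact Topology.IsEmbedding.metrizableSpace (Y := X × BoundedContinuousFunction J ℝ)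
    ⟨hΦind, hinj⟩
end
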